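/- If a set of agents {a_k, ..., a_l} is in a deadlock (all requesting, with head(k)=tail(k+1), ..., head(l)=tail(k) forming a cycle), then no agent in the deadlock can transition from requesting to extended, since every head of a deadlocked agent is occupied. -/
import Mathlib


inductive Mode where
  | contracted | requesting | extended
deriving DecidableEq

structure Config (A V : Type*) where
  mode : A → Mode
  tail : A → V
  head : A → Option V

def occupied {A V : Type*} (c : Config A V) (v : V) : Prop :=
  (∃ j, c.tail j = v) ∨ (∃ j, c.mode j = Mode.extended ∧ c.head j = some v)

inductive Step {A V : Type*} (adj : V → V → Prop) : Config A V → Config A V → Prop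
  | toRequesting (c c' : Config A V) (i : A) (u : V) :
      c.mode i = Mode.contracted → adj (c.tail i) u →
      c'.mode i = Mode.requesting → c'.head i = some u → c'.tail i = c.tail i →
      (∀ j, j ≠ i → c'.mode j = c.mode j ∧ c'.tail j = c.tail j ∧ c'.head j = c.head j) →
      Step adj c c'
  | backToContracted (c c' : Config A V) (i : A) :
      c.mode i = Mode.requesting →
      c'.mode i = Mode.contracted → c'.head i = none → c'.tail i = c.tail i →
      (∀ j, j ≠ i → c'.mode j = c.mode j ∧ c'.tail j = c.tail j ∧ c'.head j = c.head j) →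
      Step adj c c'
  | toExtended (c c' : Config A V) (i : A) (u : V) :
      c.mode i = Mode.requesting → c.head i = some u → ¬ occupied c u →
      c'.mode i = Mode.extended → c'.head i = some u → c'.tail i = c.tail i →
      (∀ j, j ≠ i → c'.mode j = c.mode j ∧ c'.tail j = c.tail j ∧ c'.head j = c.head j) →
      Step adj c c'
  | finishMove (c c' : Config A V) (i : A) (u : V) :
      c.mode i = Mode.extended → c.head i = some u →
      c'.mode i = Mode.contracted → c'.head i = none → c'.tail i = u →
      (∀ j, j ≠ i → c'.mode j = c.mode j ∧ c'.tail j = c.tail j ∧ c'.head j = c.head j) →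
      Step adj c c'

/-- If a set of agents `f 0, …, f (n-1)` is in a deadlock — all requesting, with
`head (f k) = tail (f (k+1))` cyclically — then the head of every deadlocked
agent is occupied, and consequently no deadlocked agent can transition from
requesting to extended in a single step. -/
theorem deadlock_blocks_extension
    {A V : Type*} (adj : V → V → Prop) (c : Config A V)
    {n : ℕ} [NeZero n] (f : Fin n → A) (hinj : Function.Injective f)
    (hreq : ∀ k : Fin n, c.mode (f k) = Mode.requesting)
    (hcycle : ∀ k : Fin n, c.head (f k) = some (c.tail (f (k + 1)))) :
    (∀ (k : Fin n) (u : V), c.head (f k) = some u → occupied c u) ∧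
    (∀ (k : Fin n) (c' : Config A V), Step adj c c' →
        c'.mode (f k) ≠ Mode.extended) := by
  have hocc : ∀ (k : Fin n) (u : V), c.head (f k) = some u → occupied c u := by
    intro k u hu
    rw [hcycle k] at hu
    exact Or.inl ⟨f (k + 1), Option.some_inj.mp hu⟩
  refine ⟨hocc, ?_⟩
  intro k c' hstep hmode
  cases hstep with
  | toRequesting i u h0 h1 h2 h3 h4 h5 =>
    by_cases hik : f k = i
    · rw [hik, h2] at hmode; exact Mode.noConfusion hmode
    · rw [(h5 (f k) hik).1, hreq k] at hmode; exact Mode.noConfusion hmode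
  | backToContracted i h1 h2 h3 h4 h5 =>
    by_cases hik : f k = i
    · rw [hik, h2] at hmode; exact Mode.noConfusion hmode
    · rw [(h5 (f k) hik).1, hreq k] at hmode; exact Mode.noConfusion hmode
  | toExtended i u h1 h2 hnocc h3 h4 h5 h6 =>
    by_cases hik : f k = i
    · exact hnocc (hocc k u (hik ▸ h2))
    · rw [(h6 (f k) hik).1, hreq k] at hmode; exact Mode.noConfusion hmode
  | finishMove i u h1 h2 h3 h4 h5 h6 =>
    by_cases hik : f k = i
    · rw [← hik, hreq k] at h1; exact Mode.noConfusion h1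
    · rw [(h6 (f k) hik).1, hreq k] at hmode; exact Mode.noConfusion hmode
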